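/- For every natural number r ≥ 0, the inclusion ℂ[α,β] → ℂ[α,β,γ] followed by the quotient map induces an isomorphism of ℂ-algebras F̄_r = ℂ[α,β]/J̄_r ≅ ℂ[α,β,γ]/(J_r + (γ)); equivalently, the quotient F_r/γ·F_r is isomorphic to ℂ[α,β]/J̄_r. -/

import Mathlib

open MvPolynomial

/-- The triple (R¹_r, R²_r, R³_r) of polynomials in ℂ[α,β,γ] (α = X 0, β = X 1, γ = X 2). -/
noncomputable def Rr : ℕ → MvPolynomial (Fin 3) ℂ × MvPolynomial (Fin 3) ℂ × MvPolynomial (Fin 3) ℂ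
  | 0 => (1, 0, 0)
  | (r + 1) =>
      (X 0 * (Rr r).1 + C ((r : ℂ) ^ 2) * (Rr r).2.1,
       (X 1 + C ((-1 : ℂ) ^ (r + 1) * 8)) * (Rr r).1 + C ((2 * r : ℂ) / (r + 1)) * (Rr r).2.2,
       X 2 * (Rr r).1)

/-- The ideal J_r = (R¹_r, R²_r, R³_r) ⊆ ℂ[α,β,γ]. -/
noncomputable def Jr (r : ℕ) : Ideal (MvPolynomial (Fin 3) ℂ) :=
  Ideal.span {(Rr r).1, (Rr r).2.1, (Rr r).2.2}

/-- The pair (R̄¹_r, R̄²_r) of polynomials in ℂ[α,β] (α = X 0, β = X 1). -/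
noncomputable def Rb : ℕ → MvPolynomial (Fin 2) ℂ × MvPolynomial (Fin 2) ℂ
  | 0 => (1, 0)
  | (r + 1) =>
      (X 0 * (Rb r).1 + C ((r : ℂ) ^ 2) * (Rb r).2,
       (X 1 + C ((-1 : ℂ) ^ (r + 1) * 8)) * (Rb r).1)

/-- The ideal J̄_r = (R̄¹_r, R̄²_r) ⊆ ℂ[α,β]. -/
noncomputable def Jb (r : ℕ) : Ideal (MvPolynomial (Fin 2) ℂ) :=
  Ideal.span {(Rb r).1, (Rb r).2}

noncomputable def piMap : MvPolynomial (Fin 3) ℂ →ₐ[ℂ] MvPolynomial (Fin 2) ℂ :=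
  aeval (fun i => if h : (i : ℕ) < 2 then X ⟨i, h⟩ else 0)

lemma piMap_C (c : ℂ) : piMap (C c) = C c := by simp [piMap]
lemma piMap_X0 : piMap (X 0) = X 0 := by simp [piMap]
lemma piMap_X1 : piMap (X 1) = X 1 := by simp [piMap]
lemma piMap_X2 : piMap (X 2) = 0 := by simp [piMap]

lemma piMap_Rr (r : ℕ) : piMap (Rr r).1 = (Rb r).1 ∧ piMap (Rr r).2.1 = (Rb r).2 ∧
    piMap (Rr r).2.2 = 0 := by
  induction r with
  | zero => simp [Rr, Rb]
  | succ r ih =>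
    obtain ⟨h1, h2, h3⟩ := ih
    refine ⟨?_, ?_, ?_⟩ <;>
      simp only [Rr, Rb, map_add, map_mul, piMap_C, piMap_X0, piMap_X1, piMap_X2, h1, h2, h3,
        zero_mul, mul_zero, add_zero] <;>
      try ring

lemma key (r : ℕ) :
    (Rr r).1 - rename Fin.castSucc (Rb r).1 ∈ Ideal.span {(X 2 : MvPolynomial (Fin 3) ℂ)} ∧
    (Rr r).2.1 - rename Fin.castSucc (Rb r).2 ∈ Ideal.span {(X 2 : MvPolynomial (Fin 3) ℂ)} ∧
    (Rr r).2.2 ∈ Ideal.span {(X 2 : MvPolynomial (Fin 3) ℂ)} := by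
  induction r with
  | zero => simp [Rr, Rb]
  | succ r ih =>
    obtain ⟨h1, h2, h3⟩ := ih
    refine ⟨?_, ?_, ?_⟩
    · have h : (Rr (r+1)).1 - rename Fin.castSucc (Rb (r+1)).1
          = X 0 * ((Rr r).1 - rename Fin.castSucc (Rb r).1) +
            C ((r:ℂ)^2) * ((Rr r).2.1 - rename Fin.castSucc (Rb r).2) := by
        simp only [Rr, Rb, map_add, map_mul, rename_X, rename_C]
        have e0 : X (Fin.castSucc (0 : Fin 2)) = (X 0 : MvPolynomial (Fin 3) ℂ) := rfl
        rw [e0]; ring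
      rw [h]
      exact add_mem (Ideal.mul_mem_left _ _ h1) (Ideal.mul_mem_left _ _ h2)
    · have h : (Rr (r+1)).2.1 - rename Fin.castSucc (Rb (r+1)).2
          = (X 1 + C ((-1:ℂ) ^ (r + 1) * 8)) * ((Rr r).1 - rename Fin.castSucc (Rb r).1) +
            C ((2 * r : ℂ) / (r + 1)) * (Rr r).2.2 := by
        simp only [Rr, Rb, map_add, map_mul, rename_X, rename_C]
        have e1 : X (Fin.castSucc (1 : Fin 2)) = (X 1 : MvPolynomial (Fin 3) ℂ) := rfl
        rw [e1]; ring
      rw [h]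
      exact add_mem (Ideal.mul_mem_left _ _ h1) (Ideal.mul_mem_left _ _ h3)
    · show X 2 * (Rr r).1 ∈ _
      exact Ideal.mul_mem_right _ _ (Ideal.mem_span_singleton_self _)


lemma piMap_rename (p : MvPolynomial (Fin 2) ℂ) : piMap (rename Fin.castSucc p) = p := by
  rw [piMap, aeval_rename]
  have : ((fun i : Fin 3 => if h : (i : ℕ) < 2 then (X ⟨i, h⟩ : MvPolynomial (Fin 2) ℂ) else 0) ∘ Fin.castSucc) = X := by
    funext j; simp [Fin.castSucc]
    intro h; have := j.isLt; omega
  rw [this, aeval_X_left_apply]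


lemma piMap_castSucc (i : Fin 2) : piMap (X i.castSucc) = X i := by
  have := piMap_rename (X i : MvPolynomial (Fin 2) ℂ)
  simpa using this

/-- For every r ≥ 0, the inclusion ℂ[α,β] → ℂ[α,β,γ] (given by renaming along
Fin.castSucc : Fin 2 → Fin 3, i.e. α ↦ α, β ↦ β) followed by the quotient map induces an
isomorphism of ℂ-algebras ℂ[α,β]/J̄_r ≅ ℂ[α,β,γ]/(J_r + (γ)). -/
theorem stmt3 (r : ℕ) :
    ∃ e : (MvPolynomial (Fin 2) ℂ ⧸ Jb r) ≃ₐ[ℂ]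
        (MvPolynomial (Fin 3) ℂ ⧸ (Jr r ⊔ Ideal.span {X 2})),
      ∀ p : MvPolynomial (Fin 2) ℂ,
        e (Ideal.Quotient.mk (Jb r) p) =
          Ideal.Quotient.mk (Jr r ⊔ Ideal.span {X 2}) (rename Fin.castSucc p) := by
  set S : Ideal (MvPolynomial (Fin 3) ℂ) := Jr r ⊔ Ideal.span {X 2} with hS
  obtain ⟨k1, k2, k3⟩ := key r
  obtain ⟨p1, p2, p3⟩ := piMap_Rr r
  have hR1 : (Rr r).1 ∈ S := Ideal.mem_sup_left (Ideal.subset_span (by simp))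
  have hR2 : (Rr r).2.1 ∈ S := Ideal.mem_sup_left (Ideal.subset_span (by simp))
  have hX2 : (X 2 : MvPolynomial (Fin 3) ℂ) ∈ S :=
    Ideal.mem_sup_right (Ideal.mem_span_singleton_self _)
  have hIS : Ideal.span {(X 2 : MvPolynomial (Fin 3) ℂ)} ≤ S := le_sup_right
  have hb1 : rename Fin.castSucc (Rb r).1 ∈ S := by
    have := sub_mem hR1 (hIS k1); simpa using this
  have hb2 : rename Fin.castSucc (Rb r).2 ∈ S := by
    have := sub_mem hR2 (hIS k2); simpa using this
  have hf : ∀ a ∈ Jb r, (Ideal.Quotient.mkₐ ℂ S).comp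
      (rename Fin.castSucc : MvPolynomial (Fin 2) ℂ →ₐ[ℂ] MvPolynomial (Fin 3) ℂ) a = 0 := by
    intro a ha
    rw [AlgHom.comp_apply, Ideal.Quotient.mkₐ_eq_mk, Ideal.Quotient.eq_zero_iff_mem]
    have hmap : Ideal.map (rename Fin.castSucc :
        MvPolynomial (Fin 2) ℂ →ₐ[ℂ] MvPolynomial (Fin 3) ℂ) (Jb r) ≤ S := by
      rw [Jb, Ideal.map_span, Ideal.span_le]
      rintro x hx
      simp only [Set.image_insert_eq, Set.image_singleton, Set.mem_insert_iff,
        Set.mem_singleton_iff] at hx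
      rcases hx with rfl | rfl
      exacts [hb1, hb2]
    exact hmap (Ideal.mem_map_of_mem _ ha)
  have hg : ∀ a ∈ S, (Ideal.Quotient.mkₐ ℂ (Jb r)).comp piMap a = 0 := by
    intro a ha
    rw [AlgHom.comp_apply, Ideal.Quotient.mkₐ_eq_mk, Ideal.Quotient.eq_zero_iff_mem]
    have hle : S ≤ Ideal.comap piMap.toRingHom (Jb r) := by
      rw [hS, Jr, sup_le_iff]
      constructor <;> rw [Ideal.span_le]
      · rintro x (rfl | rfl | rfl) <;>
          simp only [SetLike.mem_coe, Ideal.mem_comap, AlgHom.toRingHom_eq_coe,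
            RingHom.coe_coe, p1, p2, p3]
        · exact Ideal.subset_span (by simp)
        · exact Ideal.subset_span (by simp)
        · exact zero_mem _
      · rintro x rfl
        simp only [SetLike.mem_coe, Ideal.mem_comap, AlgHom.toRingHom_eq_coe,
          RingHom.coe_coe, piMap_X2]
        exact zero_mem _
    exact hle ha
  set f := Ideal.Quotient.liftₐ (Jb r) ((Ideal.Quotient.mkₐ ℂ S).comp
      (rename Fin.castSucc : MvPolynomial (Fin 2) ℂ →ₐ[ℂ] MvPolynomial (Fin 3) ℂ)) hf with hfdef
  set g := Ideal.Quotient.liftₐ S ((Ideal.Quotient.mkₐ ℂ (Jb r)).comp piMap) hg with hgdef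
  have fmk : ∀ q, f (Ideal.Quotient.mk (Jb r) q) = Ideal.Quotient.mk S (rename Fin.castSucc q) := by
    intro q; simp [hfdef]; rfl
  have gmk : ∀ q, g (Ideal.Quotient.mk S q) = Ideal.Quotient.mk (Jb r) (piMap q) := by
    intro q; simp [hgdef]; rfl
  have hfg : f.comp g = AlgHom.id ℂ _ := by
    apply Ideal.Quotient.algHom_ext
    apply MvPolynomial.algHom_ext
    intro i
    refine Fin.lastCases ?_ (fun j => ?_) i
    · have e2 : (X (Fin.last 2) : MvPolynomial (Fin 3) ℂ) = X 2 := rfl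
      simp only [AlgHom.comp_apply, Ideal.Quotient.mkₐ_eq_mk, AlgHom.id_apply, e2, gmk,
        piMap_X2, map_zero, fmk]
      exact ((Ideal.Quotient.eq_zero_iff_mem).mpr hX2).symm
    · simp only [AlgHom.comp_apply, Ideal.Quotient.mkₐ_eq_mk, AlgHom.id_apply, gmk,
        piMap_castSucc, fmk, rename_X]
  have hgf : g.comp f = AlgHom.id ℂ _ := by
    apply Ideal.Quotient.algHom_ext
    apply MvPolynomial.algHom_ext
    intro i
    simp only [AlgHom.comp_apply, Ideal.Quotient.mkₐ_eq_mk, AlgHom.id_apply, fmk, gmk,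
      piMap_rename]
  exact ⟨AlgEquiv.ofAlgHom f g hfg hgf, fun p => fmk p⟩
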